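/- Let G be a connected simple undirected graph on N vertices with graph Laplacian L = D − A (D the diagonal degree matrix, A the adjacency matrix), with eigenvalues 0 = λ₁ < λ₂ ≤ ⋯ ≤ λ_N. Then λ_N ≥ (N/(N−1))·d_max, where d_max is the maximum degree of G. -/

import Mathlib

open scoped RealInnerProductSpace

/-- If the Rayleigh quotient of some nonzero vector is at least `c`, then some eigenvalue
of a real Hermitian matrix is at least `c`. -/
lemma aux_exists_eigenvalue_ge {n : Type*} [Fintype n] [DecidableEq n] {A : Matrix n n ℝ}
    (hA : A.IsHermitian) (x : EuclideanSpace ℝ n) (hx : x ≠ 0) {c : ℝ}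
    (hc : c * ⟪x, x⟫ ≤ ⟪x, Matrix.toEuclideanLin A x⟫) :
    ∃ i, c ≤ hA.eigenvalues i := by
  by_contra h
  push_neg at h
  set b := hA.eigenvectorBasis with hb
  have hsym : (Matrix.toEuclideanLin A).IsSymmetric :=
    Matrix.isHermitian_iff_isSymmetric.1 hA
  have heig : ∀ i, Matrix.toEuclideanLin A (b i) = hA.eigenvalues i • b i := by
    intro i
    have := hA.mulVec_eigenvectorBasis i
    ext j
    have := congrFun this j
    simpa [Matrix.toEuclideanLin_apply] using this
  have hAx : ⟪x, Matrix.toEuclideanLin A x⟫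
      = ∑ i, hA.eigenvalues i * (⟪x, b i⟫ * ⟪x, b i⟫) := by
    rw [← b.sum_inner_mul_inner x (Matrix.toEuclideanLin A x)]
    refine Finset.sum_congr rfl fun i _ => ?_
    rw [← hsym (b i) x, heig i, real_inner_smul_left]
    rw [real_inner_comm (b i) x]
    ring
  have hxx : ⟪x, x⟫ = ∑ i, ⟪x, b i⟫ * ⟪x, b i⟫ := by
    rw [← b.sum_inner_mul_inner x x]
    refine Finset.sum_congr rfl fun i _ => ?_
    rw [real_inner_comm (b i) x]
  have hpos : 0 < ⟪x, x⟫ := by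
    rw [real_inner_self_eq_norm_mul_norm]
    exact mul_pos (norm_pos_iff.2 hx) (norm_pos_iff.2 hx)
  have hex : ∃ i ∈ Finset.univ, (0:ℝ) < ⟪x, b i⟫ * ⟪x, b i⟫ := by
    by_contra hno
    push_neg at hno
    have : ⟪x, x⟫ ≤ 0 := by
      rw [hxx]
      exact Finset.sum_nonpos fun i hi => hno i hi
    linarith
  obtain ⟨i₀, hi₀, hw⟩ := hex
  have hlt : ∑ i, hA.eigenvalues i * (⟪x, b i⟫ * ⟪x, b i⟫)
      < ∑ i, c * (⟪x, b i⟫ * ⟪x, b i⟫) := by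
    refine Finset.sum_lt_sum (fun i _ => ?_) ⟨i₀, hi₀, ?_⟩
    · exact mul_le_mul_of_nonneg_right (le_of_lt (h i)) (mul_self_nonneg _)
    · exact mul_lt_mul_of_pos_right (h i₀) hw
  rw [← Finset.mul_sum, ← hxx] at hlt
  rw [hAx] at hc
  linarith

/-- Fiedler's lower bound: for a connected simple graph `G` on `N` vertices, the largest
eigenvalue of the Laplacian `L = D − A` satisfies `λ_N ≥ (N/(N−1))·d_max`; equivalently,
some eigenvalue is at least `(N/(N−1))·d_max`. -/
theorem stmt8 {N : ℕ} (hN : 2 ≤ N) (G : SimpleGraph (Fin N)) [DecidableRel G.Adj]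
    (hconn : G.Connected) (hH : (G.lapMatrix ℝ).IsHermitian) :
    ∃ i : Fin N, ((N : ℝ) / ((N : ℝ) - 1)) * ((Finset.univ.sup (fun v => G.degree v) : ℕ) : ℝ)
      ≤ hH.eigenvalues i := by
  have hN1 : (1:ℝ) ≤ (N:ℝ) - 1 := by
    have : (2:ℝ) ≤ (N:ℝ) := by exact_mod_cast hN
    linarith
  have hN0 : ((N:ℝ) - 1) ≠ 0 := by linarith
  -- pick a vertex of maximal degree
  haveI : Nonempty (Fin N) := ⟨⟨0, by omega⟩⟩
  obtain ⟨v, -, hv⟩ := Finset.exists_mem_eq_sup (Finset.univ : Finset (Fin N))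
    (Finset.univ_nonempty) (fun v => G.degree v)
  set d : ℕ := Finset.univ.sup (fun v => G.degree v) with hd
  -- test vector
  set x : EuclideanSpace ℝ (Fin N) := WithLp.toLp 2 (fun u => if u = v then (N:ℝ) - 1 else -1) with hxdef
  have hxv : x v = (N:ℝ) - 1 := by simp [hxdef]
  have hxne : x ≠ 0 := by
    intro h0
    have : x v = 0 := by rw [h0]; rfl
    rw [hxv] at this
    linarith
  -- compute ⟪x, x⟫
  have hxu : ∀ u : Fin N, x u = if u = v then (N:ℝ) - 1 else -1 := fun u => rfl
  have hxsq : ∀ u : Fin N, x u * x u = if u = v then ((N:ℝ) - 1)^2 else 1 := by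
    intro u
    rw [hxu u]
    by_cases hu : u = v <;> simp only [hu, if_pos, if_neg, if_true, if_false] <;> ring
  have hinner_xx : ⟪x, x⟫ = ((N:ℝ) - 1) * N := by
    have : ⟪x, x⟫ = ∑ u : Fin N, x u * x u := by
      simp only [PiLp.inner_apply, RCLike.inner_apply, conj_trivial]
    rw [this]
    simp_rw [hxsq]
    have h2 : ∀ u : Fin N, (if u = v then ((N:ℝ) - 1)^2 else 1)
        = 1 + (if u = v then ((N:ℝ) - 1)^2 - 1 else 0) := by
      intro u; split <;> ring
    simp_rw [h2, Finset.sum_add_distrib, Finset.sum_const, Finset.card_univ, Fintype.card_fin,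
      Finset.sum_ite_eq' Finset.univ v, Finset.mem_univ, if_pos]
    push_cast
    ring
  -- compute the quadratic form ⟪x, L x⟫
  have hquad : ⟪x, Matrix.toEuclideanLin (G.lapMatrix ℝ) x⟫ = (d : ℝ) * (N:ℝ)^2 := by
    have h1 : ⟪x, Matrix.toEuclideanLin (G.lapMatrix ℝ) x⟫
        = Matrix.toLinearMap₂' ℝ (G.lapMatrix ℝ) x x := by
      rw [Matrix.toLinearMap₂'_apply']
      simp only [PiLp.inner_apply, RCLike.inner_apply, conj_trivial, Matrix.toEuclideanLin_apply,
        dotProduct]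
      exact Finset.sum_congr rfl fun _ _ => mul_comm _ _
    rw [h1, SimpleGraph.lapMatrix_toLinearMap₂' ℝ G (show Fin N → ℝ from x)]
    have key : ∀ i j : Fin N, (if G.Adj i j then (x i - x j)^2 else 0)
        = (if i = v then (if G.Adj i j then (N:ℝ)^2 else 0) else 0)
          + (if j = v then (if G.Adj i j then (N:ℝ)^2 else 0) else 0) := by
      intro i j
      by_cases hij : G.Adj i j
      · have hne : i ≠ j := G.ne_of_adj hij
        by_cases hi : i = v
        · have hj : j ≠ v := fun h => hne (hi.trans h.symm)
          simp only [hxu, if_pos hij, if_pos hi, if_neg hj]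
          ring
        · by_cases hj : j = v
          · simp only [hxu, if_pos hij, if_neg hi, if_pos hj]
            ring
          · simp only [hxu, if_pos hij, if_neg hi, if_neg hj]
            ring
      · simp [hij]
    simp_rw [key, Finset.sum_add_distrib]
    have hA : ∀ w : Fin N, (∑ j : Fin N, if G.Adj w j then (N:ℝ)^2 else 0)
        = (N:ℝ)^2 * (G.degree w : ℝ) := by
      intro w
      rw [G.degree_eq_sum_if_adj (R := ℝ) w, Finset.mul_sum]
      refine Finset.sum_congr rfl fun j _ => ?_
      split <;> ring
    have hfirst : (∑ i : Fin N, ∑ j : Fin N,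
        if i = v then (if G.Adj i j then (N:ℝ)^2 else 0) else 0) = (N:ℝ)^2 * (d:ℝ) := by
      have h3 : ∀ i : Fin N, (∑ j : Fin N, if i = v then (if G.Adj i j then (N:ℝ)^2 else 0) else 0)
          = if i = v then (N:ℝ)^2 * (G.degree i : ℝ) else 0 := by
        intro i
        by_cases hi : i = v
        · subst hi
          simp only [eq_self_iff_true, if_true]
          exact hA i
        · simp [hi]
      simp_rw [h3]
      rw [Finset.sum_ite_eq' Finset.univ v]
      simp only [Finset.mem_univ, if_true]
      rw [hv]
    have hsecond : (∑ i : Fin N, ∑ j : Fin N,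
        if j = v then (if G.Adj i j then (N:ℝ)^2 else 0) else 0) = (N:ℝ)^2 * (d:ℝ) := by
      rw [Finset.sum_comm]
      have h3 : ∀ j : Fin N, (∑ i : Fin N, if j = v then (if G.Adj i j then (N:ℝ)^2 else 0) else 0)
          = if j = v then (N:ℝ)^2 * (G.degree j : ℝ) else 0 := by
        intro j
        by_cases hj : j = v
        · subst hj
          simp only [eq_self_iff_true, if_true]
          rw [← hA j]
          refine Finset.sum_congr rfl fun i _ => ?_
          by_cases h : G.Adj i j
          · rw [if_pos h, if_pos h.symm]
          · rw [if_neg h, if_neg (fun h' => h h'.symm)]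
        · simp [hj]
      simp_rw [h3]
      rw [Finset.sum_ite_eq' Finset.univ v]
      simp only [Finset.mem_univ, if_true]
      rw [hv]
    rw [hfirst, hsecond]
    ring
  -- apply the Rayleigh lemma
  apply aux_exists_eigenvalue_ge hH x hxne
  rw [hinner_xx, hquad]
  rw [div_mul_eq_mul_div, div_mul_eq_mul_div, div_le_iff₀ (by linarith : (0:ℝ) < (N:ℝ) - 1)]
  ring_nf
  nlinarith [sq_nonneg ((N:ℝ) - 1)]
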